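/- Let F_ij : ℝ → ℝ, i,j = 1,…,m, satisfy |F_ij(u) − F_ij(v)| ≤ L_ij|u − v| for all u,v ∈ ℝ, where L_ij ≥ 0, and let L be the m×m matrix (L_ij). Suppose at least one of the following conditions holds: (1) max|λ(L)| < 1, where the maximum is over all (complex) eigenvalues of L; (2) max_i Σ_{j=1}^m L_ij < 1; (3) max_j Σ_{i=1}^m L_ij < 1; (4) Σ_{i=1}^m Σ_{j=1}^m L_ij² < 1. Then the system of equations u_i = Σ_{j=1}^m F_ij(u_j), i = 1,…,m, has a unique solution (u_1,…,u_m) ∈ ℝ^m. -/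

import Mathlib

open Finset Function Filter



section Key

variable {m : ℕ}

lemma pow_entry_nonneg (L : Matrix (Fin m) (Fin m) ℝ) (hL : ∀ i j, 0 ≤ L i j) :
    ∀ n i j, 0 ≤ (L ^ n) i j := by
  intro n
  induction n with
  | zero => intro i j; rw [pow_zero]; by_cases h : i = j <;>
      simp [Matrix.one_apply, h]
  | succ n ih =>
    intro i j
    rw [pow_succ, Matrix.mul_apply]
    exact Finset.sum_nonneg fun k _ => mul_nonneg (ih i k) (hL k j)

lemma key_lemma (F : Fin m → Fin m → ℝ → ℝ) (L : Matrix (Fin m) (Fin m) ℝ)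
    (hL_nonneg : ∀ i j, 0 ≤ L i j)
    (hLip : ∀ i j u v, |F i j u - F i j v| ≤ L i j * |u - v|)
    (hm : 0 < m)
    (hn : ∃ n, ∀ i, ∑ j, (L ^ n) i j < 1) :
    ∃! u : Fin m → ℝ, ∀ i, u i = ∑ j, F i j (u j) := by
  haveI : Nonempty (Fin m) := ⟨⟨0, hm⟩⟩
  set T : (Fin m → ℝ) → Fin m → ℝ := fun w i => ∑ j, F i j (w j) with hT
  have hstep : ∀ u v (i : Fin m), |T u i - T v i| ≤ ∑ j, L i j * |u j - v j| := by
    intro u v i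
    have : T u i - T v i = ∑ j, (F i j (u j) - F i j (v j)) := by
      simp [hT, Finset.sum_sub_distrib]
    rw [this]
    exact (Finset.abs_sum_le_sum_abs _ _).trans
      (Finset.sum_le_sum fun j _ => hLip i j (u j) (v j))
  have hiter : ∀ (n : ℕ) u v (i : Fin m),
      |T^[n] u i - T^[n] v i| ≤ ∑ j, (L ^ n) i j * |u j - v j| := by
    intro n
    induction n with
    | zero =>
      intro u v i
      simp [Matrix.one_apply, ite_mul]
    | succ n ih =>
      intro u v i
      rw [Function.iterate_succ_apply', Function.iterate_succ_apply']
      calc |T (T^[n] u) i - T (T^[n] v) i|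
          ≤ ∑ j, L i j * |T^[n] u j - T^[n] v j| := hstep _ _ i
        _ ≤ ∑ j, L i j * (∑ k, (L ^ n) j k * |u k - v k|) :=
            Finset.sum_le_sum fun j _ =>
              mul_le_mul_of_nonneg_left (ih u v j) (hL_nonneg i j)
        _ = ∑ k, (L ^ (n + 1)) i k * |u k - v k| := by
            rw [pow_succ']
            simp_rw [Matrix.mul_apply, Finset.mul_sum, Finset.sum_mul]
            rw [Finset.sum_comm]
            simp_rw [mul_assoc]
  obtain ⟨n, hn⟩ := hn
  set K₀ : ℝ := univ.sup' univ_nonempty (fun i => ∑ j, (L ^ n) i j) with hK₀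
  have hrow : ∀ i : Fin m, ∑ j, (L ^ n) i j ≤ K₀ := fun i => by
    rw [hK₀]; exact Finset.le_sup' (fun i => ∑ j, (L ^ n) i j) (mem_univ i)
  have hK0 : 0 ≤ K₀ := le_trans
    (Finset.sum_nonneg fun j _ => pow_entry_nonneg L hL_nonneg n (Classical.arbitrary _) j)
    (hrow _)
  have hK1 : K₀ < 1 := by
    rw [hK₀, Finset.sup'_lt_iff]
    exact fun i _ => hn i
  set K : NNReal := ⟨K₀, hK0⟩ with hK
  have hcontr : ContractingWith K (T^[n]) := by
    constructor
    · exact_mod_cast hK1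
    · apply LipschitzWith.of_dist_le_mul
      intro u v
      show dist (T^[n] u) (T^[n] v) ≤ K₀ * dist u v
      rw [dist_pi_le_iff (mul_nonneg hK0 dist_nonneg)]
      intro i
      rw [Real.dist_eq]
      calc |T^[n] u i - T^[n] v i|
          ≤ ∑ j, (L ^ n) i j * |u j - v j| := hiter n u v i
        _ ≤ ∑ j, (L ^ n) i j * dist u v := Finset.sum_le_sum fun j _ =>
            mul_le_mul_of_nonneg_left
              (by rw [← Real.dist_eq]; exact dist_le_pi_dist u v j)
              (pow_entry_nonneg L hL_nonneg n i j)
        _ = (∑ j, (L ^ n) i j) * dist u v := by rw [Finset.sum_mul]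
        _ ≤ K₀ * dist u v := mul_le_mul_of_nonneg_right (hrow i) dist_nonneg
  have hx : Function.IsFixedPt T (hcontr.fixedPoint (T^[n])) :=
    hcontr.isFixedPt_fixedPoint_iterate
  refine ⟨hcontr.fixedPoint (T^[n]), fun i => (congrFun hx i).symm, fun y hy => ?_⟩
  have hy' : Function.IsFixedPt T y := funext fun i => (hy i).symm
  exact hcontr.fixedPoint_unique' (hy'.iterate n) (hx.iterate n)

end Key


section Conds

variable {m : ℕ}


lemma cols_to_rows (L : Matrix (Fin m) (Fin m) ℝ) (hL_nonneg : ∀ i j, 0 ≤ L i j)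
    (hm : 0 < m) (h : ∀ j, ∑ i, L i j < 1) :
    ∃ n, ∀ i, ∑ j, (L ^ n) i j < 1 := by
  haveI : Nonempty (Fin m) := ⟨⟨0, hm⟩⟩
  set c : ℝ := univ.sup' univ_nonempty (fun j => ∑ i, L i j) with hc
  have hcol : ∀ j, ∑ i, L i j ≤ c := fun j => by
    rw [hc]; exact Finset.le_sup' (fun j => ∑ i, L i j) (mem_univ j)
  have hc0 : 0 ≤ c := le_trans
    (Finset.sum_nonneg fun i _ => hL_nonneg i (Classical.arbitrary _)) (hcol _)
  have hc1 : c < 1 := by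
    rw [hc, Finset.sup'_lt_iff]; exact fun j _ => h j
  set S : ℕ → ℝ := fun n => ∑ i, ∑ j, (L ^ n) i j with hS
  have hSnonneg : ∀ n, 0 ≤ S n := fun n =>
    Finset.sum_nonneg fun i _ => Finset.sum_nonneg fun j _ =>
      pow_entry_nonneg L hL_nonneg n i j
  have hstep : ∀ n, S (n + 1) ≤ c * S n := by
    intro n
    have : S (n + 1) = ∑ t, (∑ i, L i t) * (∑ j, (L ^ n) t j) := by
      rw [hS]
      simp only [pow_succ', Matrix.mul_apply, Finset.sum_mul, Finset.mul_sum]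
      have h1 : ∀ i : Fin m, ∑ j, ∑ t, L i t * (L ^ n) t j
          = ∑ t, ∑ j, L i t * (L ^ n) t j := fun i => Finset.sum_comm
      simp_rw [h1]
      rw [Finset.sum_comm]
      exact Finset.sum_congr rfl fun y _ => Finset.sum_comm
    rw [this, hS, Finset.mul_sum]
    exact Finset.sum_le_sum fun t _ => mul_le_mul_of_nonneg_right (hcol t)
      (Finset.sum_nonneg fun j _ => pow_entry_nonneg L hL_nonneg n t j)
  have hiter : ∀ n, S (n + 1) ≤ c ^ n * S 1 := by
    intro n
    induction n with
    | zero => simp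
    | succ n ih =>
      calc S (n + 2) ≤ c * S (n + 1) := hstep (n + 1)
        _ ≤ c * (c ^ n * S 1) := mul_le_mul_of_nonneg_left ih hc0
        _ = c ^ (n + 1) * S 1 := by ring
  obtain ⟨n, hn⟩ := exists_pow_lt_of_lt_one
    (x := 1 / (S 1 + 1)) (one_div_pos.mpr (by linarith [hSnonneg 1])) hc1
  refine ⟨n + 1, fun i => ?_⟩
  have h1 : ∑ j, (L ^ (n + 1)) i j ≤ S (n + 1) :=
    Finset.single_le_sum (f := fun i => ∑ j, (L ^ (n + 1)) i j)
      (fun i _ => Finset.sum_nonneg fun j _ => pow_entry_nonneg L hL_nonneg _ i j)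
      (mem_univ i)
  have h2 : c ^ n * S 1 < 1 := by
    have hS1 := hSnonneg 1
    have hcn : 0 ≤ c ^ n := pow_nonneg hc0 n
    calc c ^ n * S 1 ≤ c ^ n * (S 1 + 1) := by nlinarith
      _ < (1 / (S 1 + 1)) * (S 1 + 1) := by
          apply mul_lt_mul_of_pos_right hn; positivity
      _ = 1 := by field_simp
  exact lt_of_le_of_lt (h1.trans (hiter n)) h2

end Conds



section Frob

attribute [local instance] Matrix.frobeniusNormedRing

variable {m : ℕ}

lemma frob_norm_eq (M : Matrix (Fin m) (Fin m) ℝ) :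
    ‖M‖ ^ 2 = ∑ i, ∑ j, (M i j) ^ 2 := by
  have h : ∑ i, ∑ j, ‖M i j‖ ^ (2 : ℝ) = ∑ i, ∑ j, (M i j) ^ 2 := by
    refine Finset.sum_congr rfl fun i _ => Finset.sum_congr rfl fun j _ => ?_
    rw [Real.rpow_two, Real.norm_eq_abs, sq_abs]
  have hnn : 0 ≤ ∑ i, ∑ j, (M i j) ^ 2 :=
    Finset.sum_nonneg fun i _ => Finset.sum_nonneg fun j _ => sq_nonneg _
  rw [Matrix.frobenius_norm_def, h,
    ← Real.rpow_natCast ((∑ i, ∑ j, (M i j) ^ 2) ^ (1 / 2 : ℝ)) 2,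
    ← Real.rpow_mul hnn]
  norm_num

lemma frob_to_rows (L : Matrix (Fin m) (Fin m) ℝ) (hL_nonneg : ∀ i j, 0 ≤ L i j)
    (h : ∑ i, ∑ j, (L i j) ^ 2 < 1) :
    ∃ n, ∀ i, ∑ j, (L ^ n) i j < 1 := by
  set c : ℝ := ‖L‖ with hcdef
  have hc0 : 0 ≤ c := norm_nonneg _
  have hc1 : c < 1 := by
    have h2 : c ^ 2 < 1 := by rw [hcdef, frob_norm_eq]; exact h
    nlinarith
  obtain ⟨n, hn⟩ := exists_pow_lt_of_lt_one
    (x := 1 / ((m : ℝ) + 1)) (by positivity) hc1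
  refine ⟨n + 1, fun i => ?_⟩
  have hMn : ‖L ^ (n + 1)‖ ≤ c ^ (n + 1) := norm_pow_le' L (Nat.succ_pos n)
  have hrs2 : (∑ j, (L ^ (n + 1)) i j) ^ 2 ≤ m * ∑ j, ((L ^ (n + 1)) i j) ^ 2 := by
    simpa using sq_sum_le_card_mul_sum_sq (s := univ) (f := fun j => (L ^ (n + 1)) i j)
  have hsum_le : ∑ j, ((L ^ (n + 1)) i j) ^ 2 ≤ ‖L ^ (n + 1)‖ ^ 2 := by
    rw [frob_norm_eq]
    exact Finset.single_le_sum (f := fun i => ∑ j, ((L ^ (n + 1)) i j) ^ 2)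
      (fun i _ => Finset.sum_nonneg fun j _ => sq_nonneg _) (mem_univ i)
  have hcn : c ^ (n + 1) ≤ c ^ n := pow_le_pow_of_le_one hc0 hc1.le (Nat.le_succ n)
  have hrow_nonneg : 0 ≤ ∑ j, (L ^ (n + 1)) i j :=
    Finset.sum_nonneg fun j _ => pow_entry_nonneg L hL_nonneg _ i j
  -- (row sum)^2 ≤ m * c^(2(n+1)) < 1
  have hnorm2 : ‖L ^ (n + 1)‖ ^ 2 ≤ (c ^ n) ^ 2 := by
    have h0 : 0 ≤ ‖L ^ (n + 1)‖ := norm_nonneg _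
    nlinarith
  have hkey : (∑ j, (L ^ (n + 1)) i j) ^ 2 < 1 := by
    have hm1 : (0:ℝ) < m + 1 := by positivity
    have hcn0 : 0 ≤ c ^ n := pow_nonneg hc0 n
    have : (m : ℝ) * (c ^ n) ^ 2 < 1 := by
      have h2 : (c ^ n) ^ 2 < (1 / (m + 1)) ^ 2 := by nlinarith
      have h6 : (m : ℝ) * (1 / ((m : ℝ) + 1)) ^ 2 < 1 := by
        rw [div_pow, one_pow, mul_div_assoc']
        rw [div_lt_one (by positivity)]
        nlinarith [Nat.cast_nonneg (α := ℝ) m]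
      calc (m : ℝ) * (c ^ n) ^ 2 ≤ (m : ℝ) * (1 / ((m : ℝ) + 1)) ^ 2 :=
            mul_le_mul_of_nonneg_left h2.le (Nat.cast_nonneg m)
        _ < 1 := h6
    nlinarith [hrs2, hsum_le, hnorm2]
  nlinarith [hkey, hrow_nonneg]

end Frob



section Spec

attribute [local instance] Matrix.linftyOpNormedRing Matrix.linftyOpNormedAlgebra

variable {m : ℕ}

lemma spec_to_rows (L : Matrix (Fin m) (Fin m) ℝ) (hL_nonneg : ∀ i j, 0 ≤ L i j)
    (hm : 0 < m)
    (hspec : ∀ μ : ℂ, μ ∈ spectrum ℂ (L.map (Complex.ofReal)) → ‖μ‖ < 1) :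
    ∃ n, ∀ i, ∑ j, (L ^ n) i j < 1 := by
  haveI : Nonempty (Fin m) := ⟨⟨0, hm⟩⟩
  set A : Matrix (Fin m) (Fin m) ℂ := L.map (Complex.ofReal) with hA
  obtain ⟨z, hz, hzr⟩ := spectrum.exists_nnnorm_eq_spectralRadius (a := A)
  have hsr : spectralRadius ℂ A < 1 := by
    rw [← hzr]
    have h1 : ‖z‖ < 1 := by exact hspec z hz
    exact_mod_cast h1
  have hgel := spectrum.pow_nnnorm_pow_one_div_tendsto_nhds_spectralRadius A
  have hev : ∀ᶠ n : ℕ in atTop, (‖A ^ n‖₊ : ENNReal) ^ (1 / (n : ℝ)) < 1 :=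
    hgel.eventually_lt_const hsr
  obtain ⟨n, hnlt⟩ := hev.exists
  have hAn : ‖A ^ n‖ < 1 := by
    by_contra hge
    push_neg at hge
    have h2 : (1 : ENNReal) ≤ (‖A ^ n‖₊ : ENNReal) ^ (1 / (n : ℝ)) := by
      rw [← ENNReal.one_rpow (1 / (n : ℝ))]
      refine ENNReal.rpow_le_rpow ?_ (by positivity)
      rw [ENNReal.one_le_coe_iff]
      exact_mod_cast hge
    exact absurd hnlt (not_lt.mpr h2)
  have he : A ^ n = (L ^ n).map (Complex.ofReal) := by
    have h3 : A = (Complex.ofRealHom.mapMatrix) L := rfl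
    rw [h3, ← map_pow, RingHom.mapMatrix_apply]
    rfl
  refine ⟨n, fun i => ?_⟩
  have h4 : (∑ j, ‖(A ^ n) i j‖₊) ≤ ‖A ^ n‖₊ := by
    rw [Matrix.linfty_opNNNorm_def]
    exact Finset.le_sup (f := fun i => ∑ j, ‖(A ^ n) i j‖₊) (mem_univ i)
  have h5 : ∑ j, (L ^ n) i j = ∑ j, ‖(A ^ n) i j‖ := by
    refine Finset.sum_congr rfl fun j _ => ?_
    rw [he, Matrix.map_apply, Complex.norm_real, Real.norm_eq_abs,
      abs_of_nonneg (pow_entry_nonneg L hL_nonneg n i j)]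
  have h6 : ∑ j, ‖(A ^ n) i j‖ ≤ ‖A ^ n‖ := by
    have h7 : ((∑ j, ‖(A ^ n) i j‖₊ : NNReal) : ℝ) ≤ ‖A ^ n‖ := by
      exact_mod_cast h4
    rw [NNReal.coe_sum] at h7
    simpa using h7
  rw [h5]
  exact lt_of_le_of_lt h6 hAn

end Spec


/-- Corollary 3.2: if `|F_ij(u) − F_ij(v)| ≤ L_ij|u − v|` and at least one of the
conditions (1) every eigenvalue of `L` has modulus < 1, (2) all row sums of `L` are < 1,
(3) all column sums of `L` are < 1, (4) the sum of squares of the entries of `L` is < 1,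
holds, then the system `u_i = Σ_j F_ij(u_j)` has a unique solution. -/
theorem stmt12
    (m : ℕ)
    (F : Fin m → Fin m → ℝ → ℝ) (L : Matrix (Fin m) (Fin m) ℝ)
    (hL_nonneg : ∀ i j, 0 ≤ L i j)
    (hLip : ∀ i j u v, |F i j u - F i j v| ≤ L i j * |u - v|)
    (hcond :
      (∀ μ : ℂ, μ ∈ spectrum ℂ (L.map (Complex.ofReal)) → ‖μ‖ < 1) ∨
      (∀ i, ∑ j, L i j < 1) ∨
      (∀ j, ∑ i, L i j < 1) ∨
      (∑ i, ∑ j, (L i j) ^ 2 < 1)) :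
    ∃! u : Fin m → ℝ, ∀ i, u i = ∑ j, F i j (u j) := by
  rcases Nat.eq_zero_or_pos m with hm | hm
  · subst hm
    exact ⟨fun _ => 0, fun i => i.elim0, fun y _ => funext fun i => i.elim0⟩
  · apply key_lemma F L hL_nonneg hLip hm
    rcases hcond with h | h | h | h
    · exact spec_to_rows L hL_nonneg hm h
    · exact ⟨1, by simpa [pow_one] using h⟩
    · exact cols_to_rows L hL_nonneg hm h
    · exact frob_to_rows L hL_nonneg h
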